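/- Let n ≥ 2, let c ≥ 1, and let ξ ∈ ℂ be a primitive (n−1)-st root of unity (ξ = 1 when n = 2). For 0 ≤ i ≤ n−2 define the polynomial g_i ∈ ℂ[x_1, …, x_c] by g_i = ∏_{m=1}^{c} ( x_m · ∏_{0 ≤ j ≤ n−2, j ≠ i} (x_m − ξ^j) ). Then the ℂ-linear span of {g_0, …, g_{n−2}} in ℂ[x_1, …, x_c] has dimension n − 1, and it admits a basis h_0, …, h_{n−2} such that for each d, every monomial occurring in h_d has total degree congruent to d modulo n − 1. -/

import Mathlib

open Polynomial in
private lemma gornik_factor {k : ℕ} (hk : 0 < k) {ξ : ℂ} (hξ : IsPrimitiveRoot ξ k) (i : Fin k) :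
    (Polynomial.X : Polynomial ℂ) * ∏ j ∈ Finset.univ.erase i, (X - C (ξ ^ (j : ℕ)))
      = ∑ e ∈ Finset.Icc 1 k, C ((ξ⁻¹) ^ ((i : ℕ) * e)) * X ^ e := by
  have hξ0 : ξ ≠ 0 := hξ.ne_zero hk.ne'
  have hζk : (ξ⁻¹) ^ k = 1 := by
    rw [inv_pow, hξ.pow_eq_one, inv_one]
  have hfull : ∏ j : Fin k, (X - C (ξ ^ (j : ℕ))) = (X : Polynomial ℂ) ^ k - 1 := by
    have himg : (Polynomial.nthRootsFinset k (1 : ℂ))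
        = Finset.image (fun j : Fin k => ξ ^ (j : ℕ)) Finset.univ := by
      apply (Finset.eq_of_subset_of_card_le _ _).symm
      · intro x hx
        simp only [Finset.mem_image, Finset.mem_univ, true_and] at hx
        obtain ⟨j, rfl⟩ := hx
        rw [Polynomial.mem_nthRootsFinset hk, ← pow_mul, mul_comm, pow_mul, hξ.pow_eq_one,
          one_pow]
      · rw [hξ.card_nthRootsFinset, Finset.card_image_of_injOn]
        · simp
        · intro a _ b _ hab
          exact Fin.ext (hξ.pow_inj a.isLt b.isLt hab)
    rw [Polynomial.X_pow_sub_one_eq_prod hk hξ, himg, Finset.prod_image]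
    intro a _ b _ hab
    exact Fin.ext (hξ.pow_inj a.isLt b.isLt hab)
  set ζ : ℂ := ξ⁻¹ with hζ
  set Y : Polynomial ℂ := C (ζ ^ (i : ℕ)) * X with hY
  have hξζ : ξ ^ (i : ℕ) * ζ ^ (i : ℕ) = 1 := by
    rw [hζ, ← mul_pow, mul_inv_cancel₀ hξ0, one_pow]
  have hYe : ∀ e : ℕ, C (ζ ^ ((i : ℕ) * e)) * X ^ e = Y ^ e := by
    intro e
    rw [hY, mul_pow, ← C_pow, ← pow_mul]
  have hRHS : ∑ e ∈ Finset.Icc 1 k, C (ζ ^ ((i : ℕ) * e)) * X ^ e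
      = Y * ∑ e ∈ Finset.range k, Y ^ e := by
    rw [Finset.mul_sum]
    rw [show Finset.Icc 1 k = Finset.Ico 1 (k+1) by rw [Finset.Ico_add_one_right_eq_Icc]]
    rw [Finset.sum_Ico_eq_sum_range]
    simp only [Nat.add_sub_cancel, hYe]
    apply Finset.sum_congr rfl
    intro e _
    rw [Nat.add_comm 1 e, pow_succ']
  rw [hRHS]
  apply mul_right_cancel₀ (b := X - C (ξ ^ (i : ℕ))) (Polynomial.X_sub_C_ne_zero _)
  have hsplit : X - C (ξ ^ (i : ℕ)) = C (ξ ^ (i : ℕ)) * (Y - 1) := by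
    rw [hY, mul_sub, mul_one, ← mul_assoc, ← C_mul, hξζ, C_1, one_mul]
  calc (X * ∏ j ∈ Finset.univ.erase i, (X - C (ξ ^ (j : ℕ)))) * (X - C (ξ ^ (i : ℕ)))
      = X * ((X - C (ξ ^ (i : ℕ))) * ∏ j ∈ Finset.univ.erase i, (X - C (ξ ^ (j : ℕ)))) := by
        ring
    _ = X * ((X : Polynomial ℂ) ^ k - 1) := by
        rw [Finset.mul_prod_erase Finset.univ (fun j : Fin k => X - C (ξ ^ (j : ℕ)))
          (Finset.mem_univ i), hfull]
    _ = (Y * ∑ e ∈ Finset.range k, Y ^ e) * (X - C (ξ ^ (i : ℕ))) := by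
        rw [hsplit]
        have harr : (Y * ∑ e ∈ Finset.range k, Y ^ e) * (C (ξ ^ (i : ℕ)) * (Y - 1))
            = (C (ξ ^ (i : ℕ)) * Y) * ((∑ e ∈ Finset.range k, Y ^ e) * (Y - 1)) := by ring
        rw [harr, geom_sum_mul]
        have h1 : C (ξ ^ (i : ℕ)) * Y = X := by
          rw [hY, ← mul_assoc, ← C_mul, hξζ, C_1, one_mul]
        have h2 : Y ^ k = X ^ k := by
          rw [hY, mul_pow, ← C_pow, ← pow_mul, mul_comm (i : ℕ) k, pow_mul, hζk, one_pow,
            C_1, one_mul]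
        rw [h1, h2]

open MvPolynomial

private lemma gornik_mono_eq_prod {c : ℕ} (e : Fin c → ℕ) :
    (monomial (Finsupp.equivFunOnFinite.symm e) (1 : ℂ) : MvPolynomial (Fin c) ℂ)
      = ∏ m : Fin c, (X m : MvPolynomial (Fin c) ℂ) ^ e m := by
  rw [monomial_eq, C_1, one_mul]
  rw [Finsupp.prod_fintype]
  · simp
  · intro m; exact pow_zero _

private lemma gornik_factor_mv {k : ℕ} (hk : 0 < k) {ξ : ℂ} (hξ : IsPrimitiveRoot ξ k)
    (i : Fin k) {c : ℕ} (m : Fin c) :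
    (X m : MvPolynomial (Fin c) ℂ) * ∏ j ∈ Finset.univ.erase i, (X m - C (ξ ^ (j : ℕ)))
      = ∑ e ∈ Finset.Icc 1 k, C ((ξ⁻¹) ^ ((i : ℕ) * e)) * X m ^ e := by
  have := congrArg (Polynomial.aeval (X m : MvPolynomial (Fin c) ℂ)) (gornik_factor hk hξ i)
  simpa [map_prod, map_sum, MvPolynomial.algebraMap_eq] using this

private lemma gornik_g_expand {k c : ℕ} (hk : 0 < k) {ξ : ℂ} (hξ : IsPrimitiveRoot ξ k)
    (i : Fin k) :
    ∏ m : Fin c, ((X m : MvPolynomial (Fin c) ℂ)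
        * ∏ j ∈ Finset.univ.erase i, (X m - C (ξ ^ (j : ℕ))))
      = ∑ e ∈ Fintype.piFinset (fun _ : Fin c => Finset.Icc 1 k),
          C ((ξ⁻¹) ^ ((i : ℕ) * ∑ m, e m)) * monomial (Finsupp.equivFunOnFinite.symm e) 1 := by
  calc ∏ m : Fin c, ((X m : MvPolynomial (Fin c) ℂ)
        * ∏ j ∈ Finset.univ.erase i, (X m - C (ξ ^ (j : ℕ))))
      = ∏ m : Fin c, ∑ e ∈ Finset.Icc 1 k, C ((ξ⁻¹) ^ ((i : ℕ) * e)) * X m ^ e := by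
        exact Finset.prod_congr rfl fun m _ => gornik_factor_mv hk hξ i m
    _ = ∑ e ∈ Fintype.piFinset (fun _ : Fin c => Finset.Icc 1 k),
          ∏ m : Fin c, C ((ξ⁻¹) ^ ((i : ℕ) * e m)) * X m ^ e m := by
        rw [Finset.prod_univ_sum]
    _ = _ := by
        apply Finset.sum_congr rfl
        intro e _
        rw [Finset.prod_mul_distrib, gornik_mono_eq_prod, ← map_prod]
        congr 2
        rw [Finset.prod_pow_eq_pow_sum, Finset.mul_sum]

private lemma gornik_main (k c : ℕ) (hk : 0 < k) (hc : 1 ≤ c)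
    (ξ : ℂ) (hξ : IsPrimitiveRoot ξ k)
    (g : Fin k → MvPolynomial (Fin c) ℂ)
    (hg : ∀ i : Fin k, g i
      = ∏ m : Fin c, (X m * ∏ j ∈ Finset.univ.erase i, (X m - MvPolynomial.C (ξ ^ (j : ℕ))))) :
    Module.finrank ℂ (Submodule.span ℂ (Set.range g)) = k ∧
    ∃ h : Fin k → MvPolynomial (Fin c) ℂ,
      LinearIndependent ℂ h ∧
      Submodule.span ℂ (Set.range h) = Submodule.span ℂ (Set.range g) ∧
      ∀ (d : Fin k), ∀ μ ∈ (h d).support,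
        (μ.sum fun _ e => e) % k = (d : ℕ) := by
  classical
  have hξ0 : ξ ≠ 0 := hξ.ne_zero hk.ne'
  set ζ : ℂ := ξ⁻¹ with hζdef
  have hζk : ζ ^ k = 1 := by rw [hζdef, inv_pow, hξ.pow_eq_one, inv_one]
  set E : Finset (Fin c → ℕ) := Fintype.piFinset (fun _ : Fin c => Finset.Icc 1 k) with hE
  set σf : (Fin c → ℕ) → ℕ := fun e => ∑ m, e m with hσf
  set fib : (Fin c → ℕ) → Fin k := fun e => ⟨σf e % k, Nat.mod_lt _ hk⟩ with hfib
  set h : Fin k → MvPolynomial (Fin c) ℂ := fun d =>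
      ∑ e ∈ E.filter (fun e => fib e = d), monomial (Finsupp.equivFunOnFinite.symm e) 1
    with hh
  -- power mod lemma
  have hpowmod : ∀ a b : ℕ, ζ ^ (a * b) = ζ ^ (a * (b % k)) := by
    intro a b
    conv_lhs => rw [← Nat.div_add_mod b k]
    rw [Nat.mul_add, pow_add, show a * (k * (b / k)) = k * (a * (b / k)) by ring, pow_mul,
      hζk, one_pow, one_mul]
  -- expansion of g in terms of h
  have hgexp : ∀ i : Fin k, g i = ∑ d : Fin k, (ζ ^ ((i : ℕ) * (d : ℕ))) • h d := by
    intro i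
    rw [hg i, gornik_g_expand hk hξ i]
    rw [← Finset.sum_fiberwise E fib
      (fun e => C (ζ ^ ((i : ℕ) * σf e)) * monomial (Finsupp.equivFunOnFinite.symm e) 1)]
    apply Finset.sum_congr rfl
    intro d _
    rw [Finset.smul_sum]
    apply Finset.sum_congr rfl
    intro e he
    have hfe : fib e = d := (Finset.mem_filter.mp he).2
    have hσ : σf e % k = (d : ℕ) := congrArg Fin.val hfe
    rw [smul_eq_C_mul, hpowmod, hσ]
  -- witness exponent vectors
  set e₀ : Fin k → (Fin c → ℕ) := fun d =>
    Function.update (fun _ : Fin c => 1) ⟨0, hc⟩ (1 + ((d : ℕ) + k * c - c) % k) with he₀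
  have hr : ∀ d : Fin k, ((d : ℕ) + k * c - c) % k < k := fun d => Nat.mod_lt _ hk
  have he₀E : ∀ d : Fin k, e₀ d ∈ E := by
    intro d
    rw [hE, Fintype.mem_piFinset]
    intro m
    rw [Finset.mem_Icc, he₀]
    by_cases hm : m = (⟨0, hc⟩ : Fin c)
    · subst hm
      simp only [Function.update_self]
      exact ⟨by omega, by have := hr d; omega⟩
    · simp only [Function.update_of_ne hm]
      exact ⟨le_refl _, hk⟩
  have hσe₀ : ∀ d : Fin k, σf (e₀ d) = (1 + ((d : ℕ) + k * c - c) % k) + (c - 1) := by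
    intro d
    rw [hσf, he₀]
    simp only
    rw [Finset.sum_update_of_mem (Finset.mem_univ _)]
    congr 1
    rw [Finset.sum_const, Finset.sdiff_singleton_eq_erase,
      Finset.card_erase_of_mem (Finset.mem_univ _), Finset.card_univ, Fintype.card_fin,
      smul_eq_mul, mul_one]
  have hfibe₀ : ∀ d : Fin k, fib (e₀ d) = d := by
    intro d
    rw [hfib]
    apply Fin.ext
    simp only
    rw [hσe₀ d]
    have hck : c ≤ k * c := Nat.le_mul_of_pos_left c hk
    have h1 : (1 + ((d : ℕ) + k * c - c) % k) + (c - 1) = c + ((d : ℕ) + k * c - c) % k := by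
      omega
    rw [h1, Nat.add_mod_mod]
    have h2 : c + ((d : ℕ) + k * c - c) = (d : ℕ) + k * c := by omega
    rw [h2, Nat.add_mul_mod_self_left, Nat.mod_eq_of_lt d.isLt]
  -- coefficient picking
  have hcoeff : ∀ d d' : Fin k,
      coeff (Finsupp.equivFunOnFinite.symm (e₀ d)) (h d') = if d' = d then 1 else 0 := by
    intro d d'
    rw [hh]
    simp only
    rw [MvPolynomial.coeff_sum]
    simp only [coeff_monomial, EmbeddingLike.apply_eq_iff_eq]
    rw [Finset.sum_ite_eq' (E.filter (fun e => fib e = d')) (e₀ d) (fun _ => (1 : ℂ))]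
    by_cases hdd : d' = d
    · subst hdd
      rw [if_pos (Finset.mem_filter.mpr ⟨he₀E d', hfibe₀ d'⟩), if_pos rfl]
    · rw [if_neg, if_neg hdd]
      intro hmem
      exact hdd (((Finset.mem_filter.mp hmem).2).symm.trans (hfibe₀ d))
  -- linear independence
  have hli : LinearIndependent ℂ h := by
    rw [Fintype.linearIndependent_iff]
    intro gc hgc d
    have hc2 := congrArg (coeff (Finsupp.equivFunOnFinite.symm (e₀ d))) hgc
    rw [MvPolynomial.coeff_sum] at hc2
    simp only [coeff_smul, hcoeff, smul_eq_mul, mul_ite, mul_one, mul_zero, coeff_zero] at hc2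
    rwa [Finset.sum_ite_eq' Finset.univ d gc, if_pos (Finset.mem_univ d)] at hc2
  -- orthogonality
  have horth : ∀ d d' : Fin k,
      (∑ i : Fin k, ξ ^ ((i : ℕ) * (d : ℕ)) * ζ ^ ((i : ℕ) * (d' : ℕ)))
        = if d' = d then (k : ℂ) else 0 := by
    intro d d'
    have hterm : ∀ i : Fin k, ξ ^ ((i : ℕ) * (d : ℕ)) * ζ ^ ((i : ℕ) * (d' : ℕ))
        = (ξ ^ (d : ℕ) * ζ ^ (d' : ℕ)) ^ (i : ℕ) := by
      intro i
      rw [mul_pow, mul_comm (i : ℕ) (d : ℕ), mul_comm (i : ℕ) (d' : ℕ), pow_mul, pow_mul]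
    simp only [hterm]
    rw [Fin.sum_univ_eq_sum_range (fun i => (ξ ^ (d : ℕ) * ζ ^ (d' : ℕ)) ^ i) k]
    by_cases hdd : d' = d
    · subst hdd
      rw [hζdef, inv_pow, mul_inv_cancel₀ (pow_ne_zero _ hξ0), if_pos rfl]
      simp
    · have hω1 : ξ ^ (d : ℕ) * ζ ^ (d' : ℕ) ≠ 1 := by
        rw [hζdef, inv_pow, Ne, mul_inv_eq_one₀ (pow_ne_zero _ hξ0)]
        intro heq
        exact hdd (Fin.ext (hξ.pow_inj d.isLt d'.isLt heq)).symm
      have hωk : (ξ ^ (d : ℕ) * ζ ^ (d' : ℕ)) ^ k = 1 := by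
        rw [mul_pow, ← pow_mul, ← pow_mul, mul_comm (d : ℕ) k, mul_comm (d' : ℕ) k,
          pow_mul, pow_mul, hξ.pow_eq_one, hζk, one_pow, one_pow, one_mul]
      rw [geom_sum_eq hω1, hωk, sub_self, zero_div, if_neg hdd]
  -- inverse DFT: h d lies in span of g
  have hkey : ∀ d : Fin k, ∑ i : Fin k, (ξ ^ ((i : ℕ) * (d : ℕ))) • g i = (k : ℂ) • h d := by
    intro d
    calc ∑ i : Fin k, (ξ ^ ((i : ℕ) * (d : ℕ))) • g i
        = ∑ i : Fin k, ∑ d' : Fin k,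
            (ξ ^ ((i : ℕ) * (d : ℕ)) * ζ ^ ((i : ℕ) * (d' : ℕ))) • h d' := by
          apply Finset.sum_congr rfl
          intro i _
          rw [hgexp i, Finset.smul_sum]
          simp only [smul_smul]
      _ = ∑ d' : Fin k,
            (∑ i : Fin k, ξ ^ ((i : ℕ) * (d : ℕ)) * ζ ^ ((i : ℕ) * (d' : ℕ))) • h d' := by
          rw [Finset.sum_comm]
          simp only [Finset.sum_smul]
      _ = (k : ℂ) • h d := by
          simp only [horth]
          simp only [ite_smul, zero_smul]
          rw [Finset.sum_ite_eq' Finset.univ d (fun d' => (k : ℂ) • h d'),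
            if_pos (Finset.mem_univ d)]
  have hspan : Submodule.span ℂ (Set.range h) = Submodule.span ℂ (Set.range g) := by
    apply le_antisymm
    · rw [Submodule.span_le]
      rintro _ ⟨d, rfl⟩
      have hd : h d = (k : ℂ)⁻¹ • ∑ i : Fin k, (ξ ^ ((i : ℕ) * (d : ℕ))) • g i := by
        rw [hkey d, smul_smul, inv_mul_cancel₀ (Nat.cast_ne_zero.mpr hk.ne'), one_smul]
      rw [hd]
      exact Submodule.smul_mem _ _ (Submodule.sum_mem _ fun i _ =>
        Submodule.smul_mem _ _ (Submodule.subset_span ⟨i, rfl⟩))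
    · rw [Submodule.span_le]
      rintro _ ⟨i, rfl⟩
      rw [hgexp i]
      exact Submodule.sum_mem _ fun d _ =>
        Submodule.smul_mem _ _ (Submodule.subset_span ⟨d, rfl⟩)
  -- support statement
  have hsupp : ∀ d : Fin k, ∀ μ ∈ (h d).support, (μ.sum fun _ e => e) % k = (d : ℕ) := by
    intro d μ hμ
    rw [MvPolynomial.mem_support_iff] at hμ
    by_contra hne
    apply hμ
    rw [hh]
    simp only
    rw [MvPolynomial.coeff_sum]
    apply Finset.sum_eq_zero
    intro e he
    rw [coeff_monomial, if_neg]
    intro heq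
    apply hne
    have hfe : fib e = d := (Finset.mem_filter.mp he).2
    have hsum : (μ.sum fun _ x => x) = σf e := by
      rw [← heq, Finsupp.sum_fintype]
      · simp [hσf]
      · intro m; rfl
    rw [hsum]
    exact congrArg Fin.val hfe
  refine ⟨?_, h, hli, hspan, hsupp⟩
  rw [← hspan, finrank_span_eq_card hli, Fintype.card_fin]


open MvPolynomial

/-- Let `n ≥ 2`, `c ≥ 1` and let `ξ` be a primitive `(n−1)`-st root of unity.  The span of
the Gornik cocycles `g_i = ∏_{m=1}^{c} ( x_m · ∏_{j ≠ i} (x_m − ξ^j) )`, `0 ≤ i ≤ n−2`,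
in `ℂ[x_1, …, x_c]` has dimension `n − 1`, and it admits a basis `h_0, …, h_{n−2}` such that
for each `d`, every monomial occurring in `h_d` has total degree congruent to `d`
modulo `n − 1`. -/
theorem gornik_generators_cyclic_basis (n c : ℕ) (hn : 2 ≤ n) (hc : 1 ≤ c)
    (ξ : ℂ) (hξ : IsPrimitiveRoot ξ (n - 1))
    (g : Fin (n - 1) → MvPolynomial (Fin c) ℂ)
    (hg : ∀ i : Fin (n - 1), g i
      = ∏ m : Fin c, (X m * ∏ j ∈ Finset.univ.erase i, (X m - MvPolynomial.C (ξ ^ (j : ℕ))))) :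
    Module.finrank ℂ (Submodule.span ℂ (Set.range g)) = n - 1 ∧
    ∃ h : Fin (n - 1) → MvPolynomial (Fin c) ℂ,
      LinearIndependent ℂ h ∧
      Submodule.span ℂ (Set.range h) = Submodule.span ℂ (Set.range g) ∧
      ∀ (d : Fin (n - 1)), ∀ μ ∈ (h d).support,
        (μ.sum fun _ e => e) % (n - 1) = (d : ℕ) := by
  exact gornik_main (n - 1) c (by omega) hc ξ hξ g hg
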